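/- Let λ > 0, let (P_n)_{n≥2} satisfy P_2 = 1/λ and P_n = P_{n-1}·(1 − 1/(n−1)) + 1/λ for n ≥ 3, and let (I_n)_{n≥2} satisfy I_2 = 0 and I_n = I_{n-1} + P_{n-1}/(n−1) for n ≥ 3. Define p_n = P_n/n and i_n = I_n/(n−2). Then for all n ≥ 3, i_n = p_n = 1/(2λ). -/

import Mathlib

/-- Theorem 1 of the paper: with the recursions for the expected pendant
edge-length sum `P` and interior edge-length sum `I`, the averages satisfy
`i_n = p_n = 1/(2λ)` for all `n ≥ 3`. -/
theorem yule_average_pendant_eq_interior (lam : ℝ) (hlam : 0 < lam) (P I : ℕ → ℝ)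
    (hP2 : P 2 = 1 / lam)
    (hPrec : ∀ n : ℕ, 3 ≤ n → P n = P (n - 1) * (1 - 1 / ((n : ℝ) - 1)) + 1 / lam)
    (hI2 : I 2 = 0)
    (hIrec : ∀ n : ℕ, 3 ≤ n → I n = I (n - 1) + P (n - 1) / ((n : ℝ) - 1)) :
    ∀ n : ℕ, 3 ≤ n →
      I n / ((n : ℝ) - 2) = 1 / (2 * lam) ∧ P n / (n : ℝ) = 1 / (2 * lam) := by
  have hl : lam ≠ 0 := ne_of_gt hlam
  have hPval : ∀ n : ℕ, 2 ≤ n → P n = n / (2 * lam) := by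
    intro n hn
    induction n, hn using Nat.le_induction with
    | base => rw [hP2]; field_simp; norm_num
    | succ n hn ih =>
      have h3 : 3 ≤ n + 1 := by omega
      have h1 : ((n : ℝ) + 1) - 1 ≠ 0 := by
        have : (2 : ℝ) ≤ n := by exact_mod_cast hn
        nlinarith
      have := hPrec (n + 1) h3
      simp only [Nat.add_sub_cancel] at this
      rw [this, ih]
      push_cast at h1 ⊢
      field_simp
      ring
  have hIval : ∀ n : ℕ, 2 ≤ n → I n = ((n : ℝ) - 2) / (2 * lam) := by
    intro n hn
    induction n, hn using Nat.le_induction with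
    | base => rw [hI2]; norm_num
    | succ n hn ih =>
      have h3 : 3 ≤ n + 1 := by omega
      have h1 : ((n : ℝ) + 1) - 1 ≠ 0 := by
        have : (2 : ℝ) ≤ n := by exact_mod_cast hn
        nlinarith
      have := hIrec (n + 1) h3
      simp only [Nat.add_sub_cancel] at this
      rw [this, ih, hPval n hn]
      push_cast at h1 ⊢
      field_simp
      ring
  intro n hn
  have h2 : (2 : ℕ) ≤ n := by omega
  have hn2 : ((n : ℝ)) - 2 ≠ 0 := by
    have : (3 : ℝ) ≤ n := by exact_mod_cast hn
    nlinarith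
  have hnne : (n : ℝ) ≠ 0 := by positivity
  constructor
  · rw [hIval n h2]; field_simp
  · rw [hPval n h2]; field_simp
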